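/- Let h_{u,w,b}(x) = Σ_{i=1}^q u_i σ(⟨w^{(i)},x⟩ + b_i) be a one-hidden-layer fully-connected network with |σ'| ≤ 1, |u_i| ≤ 1, and h(x) ∈ [−1,1] for all x ∈ {±1}^n. Let D be uniform on {±1}^n, f = χ_I a parity on k coordinates, and let W be a permutation-invariant distribution over R^n from which w^{(1)},...,w^{(q)} are drawn. Then E_{w∼W} ‖∂/∂W L_{f,D}(h_{u,w,b})‖² ≤ qn · min{C(n−1,k)^{-1}, C(n−1,k−1)^{-1}}, where L_{f,D} is the population hinge loss and ∂/∂W denotes the gradient with respect to all first-layer weights. -/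

import Mathlib

namespace Stmt14
variable {n : ℕ}

noncomputable def sgn (x : Fin n → Bool) (l : Fin n) : ℝ := if x l then 1 else -1

noncomputable def chi (K : Finset (Fin n)) (x : Fin n → Bool) : ℝ := ∏ l ∈ K, sgn x l

lemma sgn_mul_self (x : Fin n → Bool) (l : Fin n) : sgn x l * sgn x l = 1 := by
  unfold sgn; split <;> norm_num

lemma abs_sgn (x : Fin n → Bool) (l : Fin n) : |sgn x l| = 1 := by
  unfold sgn; split <;> norm_num

lemma abs_chi (K : Finset (Fin n)) (x : Fin n → Bool) : |chi K x| = 1 := by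
  unfold chi
  rw [Finset.abs_prod]
  simp [abs_sgn]

lemma card_cube : (Finset.univ : Finset (Fin n → Bool)).card = 2 ^ n := by
  simp [Finset.card_univ]

lemma chi_key (x y : Fin n → Bool) :
    (∑ K : Finset (Fin n), chi K x * chi K y) = if x = y then (2:ℝ)^n else 0 := by
  have h1 : ∀ K : Finset (Fin n), chi K x * chi K y = ∏ l ∈ K, (sgn x l * sgn y l) := by
    intro K; unfold chi; rw [Finset.prod_mul_distrib]
  simp only [h1]
  have h2 : (∑ K : Finset (Fin n), ∏ l ∈ K, (sgn x l * sgn y l))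
      = ∏ l : Fin n, (sgn x l * sgn y l + 1) := by
    rw [Finset.prod_add]
    simp [Finset.powerset_univ]
  rw [h2]
  split
  · next h =>
    subst h
    have : ∀ l : Fin n, sgn x l * sgn x l + 1 = 2 := by
      intro l; rw [sgn_mul_self]; norm_num
    simp [this]
  · next h =>
    have : ∃ l, x l ≠ y l := by
      by_contra hc
      push_neg at hc
      exact h (funext hc)
    obtain ⟨l, hl⟩ := this
    apply Finset.prod_eq_zero (Finset.mem_univ l)
    unfold sgn
    rcases Bool.eq_false_or_eq_true (x l) with h1 | h1 <;>
      rcases Bool.eq_false_or_eq_true (y l) with h2 | h2 <;>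
      simp_all

lemma parseval (g : (Fin n → Bool) → ℝ) (hg : ∀ x, |g x| ≤ 1) :
    ∑ K : Finset (Fin n), (((2:ℝ)^n)⁻¹ * ∑ x : Fin n → Bool, g x * chi K x)^2 ≤ 1 := by
  set c : ℝ := ((2:ℝ)^n)⁻¹ with hc
  have expand : ∀ K : Finset (Fin n),
      (c * ∑ x : Fin n → Bool, g x * chi K x)^2
        = c^2 * ∑ x : Fin n → Bool, ∑ y : Fin n → Bool,
            (g x * g y) * (chi K x * chi K y) := by
    intro K
    rw [mul_pow, sq (∑ x : Fin n → Bool, g x * chi K x), Finset.sum_mul_sum]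
    congr 1
    refine Finset.sum_congr rfl fun x _ => Finset.sum_congr rfl fun y _ => by ring
  simp only [expand]
  rw [← Finset.mul_sum, Finset.sum_comm]
  have swap2 : ∑ x : Fin n → Bool, ∑ K : Finset (Fin n), ∑ y : Fin n → Bool,
      (g x * g y) * (chi K x * chi K y)
      = ∑ x : Fin n → Bool, ∑ y : Fin n → Bool, (g x * g y) *
          ∑ K : Finset (Fin n), (chi K x * chi K y) := by
    refine Finset.sum_congr rfl fun x _ => ?_
    rw [Finset.sum_comm]
    exact Finset.sum_congr rfl fun y _ => (Finset.mul_sum _ _ _).symm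
  rw [swap2]
  have collapse : ∀ x : Fin n → Bool,
      (∑ y : Fin n → Bool, (g x * g y) * ∑ K : Finset (Fin n), (chi K x * chi K y))
        = g x * g x * (2:ℝ)^n := by
    intro x
    have : ∀ y : Fin n → Bool, (g x * g y) * ∑ K : Finset (Fin n), (chi K x * chi K y)
        = if y = x then g x * g x * (2:ℝ)^n else 0 := by
      intro y
      rw [chi_key]
      by_cases h : y = x
      · subst h; simp
      · have : ¬ (x = y) := fun hh => h hh.symm
        simp [h, this]
    simp only [this]
    simp
  simp only [collapse]
  rw [← Finset.sum_mul]
  have hsum : ∑ x : Fin n → Bool, g x * g x ≤ (2:ℝ)^n := by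
    calc ∑ x : Fin n → Bool, g x * g x ≤ ∑ _x : Fin n → Bool, (1:ℝ) := by
          refine Finset.sum_le_sum fun x _ => ?_
          have := abs_le.mp (hg x)
          nlinarith [this.1, this.2]
      _ = (2:ℝ)^n := by simp [card_cube]
  have h2n : (0:ℝ) < (2:ℝ)^n := by positivity
  calc c^2 * ((∑ x : Fin n → Bool, g x * g x) * (2:ℝ)^n)
      ≤ c^2 * ((2:ℝ)^n * (2:ℝ)^n) := by
        apply mul_le_mul_of_nonneg_left _ (by positivity)
        exact mul_le_mul_of_nonneg_right hsum (le_of_lt h2n)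
    _ = 1 := by
        rw [hc]
        field_simp


section coef
variable (dσ : ℝ → ℝ)

noncomputable def coef (c β : ℝ) (w : Fin n → ℝ) (K : Finset (Fin n)) : ℝ :=
  ((2:ℝ)^n)⁻¹ * ∑ x : Fin n → Bool, (c * dσ (∑ l, w l * sgn x l + β)) * chi K x

lemma coef_perm (π : Equiv.Perm (Fin n)) (c β : ℝ) (w : Fin n → ℝ) (K : Finset (Fin n)) :
    coef dσ c β (w ∘ π) K = coef dσ c β w (K.map π.toEmbedding) := by
  unfold coef
  congr 1
  refine Fintype.sum_equiv (Equiv.arrowCongr π (Equiv.refl Bool)) _ _ fun x => ?_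
  have hy : ∀ l, (Equiv.arrowCongr π (Equiv.refl Bool) x) l = x (π.symm l) := fun l => rfl
  congr 1
  · congr 2
    have hs := Fintype.sum_equiv π (fun l => (w ∘ π) l * sgn x l)
      (fun l => w l * sgn ((Equiv.arrowCongr π (Equiv.refl Bool)) x) l)
      (fun l => by simp only [Function.comp_apply, hy, sgn, Equiv.symm_apply_apply])
    rw [hs]
  · unfold chi
    rw [Finset.prod_map]
    refine Finset.prod_congr rfl fun l _ => ?_
    simp only [sgn, hy, Equiv.coe_toEmbedding, Equiv.symm_apply_apply]

lemma coef_measurable (hmeas : Measurable dσ) (c β : ℝ) (K : Finset (Fin n)) :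
    Measurable (fun w => coef dσ c β w K) := by
  unfold coef
  apply Measurable.const_mul
  apply Finset.measurable_sum
  intro x _
  apply Measurable.mul_const
  apply Measurable.const_mul
  exact hmeas.comp ((Finset.measurable_sum _ fun l _ =>
    (measurable_pi_apply l).mul_const _).add_const β)

lemma coef_abs_le (hd : ∀ t, |dσ t| ≤ 1) {c : ℝ} (hc : |c| ≤ 1) (β : ℝ)
    (w : Fin n → ℝ) (K : Finset (Fin n)) : |coef dσ c β w K| ≤ 1 := by
  unfold coef
  have h2n : (0:ℝ) < (2:ℝ)^n := by positivity
  rw [abs_mul, abs_inv, abs_pow, abs_two]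
  rw [inv_mul_le_iff₀ h2n, mul_one]
  calc |∑ x : Fin n → Bool, (c * dσ (∑ l, w l * sgn x l + β)) * chi K x|
      ≤ ∑ x : Fin n → Bool, |(c * dσ (∑ l, w l * sgn x l + β)) * chi K x| :=
        Finset.abs_sum_le_sum_abs _ _
    _ ≤ ∑ _x : Fin n → Bool, (1:ℝ) := by
        refine Finset.sum_le_sum fun x _ => ?_
        rw [abs_mul, abs_mul, abs_chi, mul_one]
        exact mul_le_one₀ hc (abs_nonneg _) (hd _)
    _ = (2:ℝ)^n := by simp [card_cube]

lemma exists_perm_map (K K' : Finset (Fin n)) (h : K.card = K'.card) :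
    ∃ π : Equiv.Perm (Fin n), K.map π.toEmbedding = K' := by
  classical
  have hcard : Fintype.card {a : Fin n // a ∈ K} = Fintype.card {a : Fin n // a ∈ K'} := by
    simp [Fintype.card_coe, h]
  have hcardc : Fintype.card {a : Fin n // a ∉ K} = Fintype.card {a : Fin n // a ∉ K'} := by
    rw [Fintype.card_subtype_compl, Fintype.card_subtype_compl, Fintype.card_coe,
      Fintype.card_coe, h]
  obtain ⟨e⟩ := Fintype.card_eq.mp hcard
  obtain ⟨e'⟩ := Fintype.card_eq.mp hcardc
  refine ⟨(Equiv.sumCompl (· ∈ K)).symm.trans ((Equiv.sumCongr e e').trans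
    (Equiv.sumCompl (· ∈ K'))), ?_⟩
  apply Finset.eq_of_subset_of_card_le
  · intro a ha
    rw [Finset.mem_map] at ha
    obtain ⟨x, hx, rfl⟩ := ha
    simp only [Equiv.coe_toEmbedding, Equiv.trans_apply,
      Equiv.sumCompl_symm_apply_of_pos hx, Equiv.sumCongr_apply, Sum.map_inl,
      Equiv.sumCompl_apply_inl]
    exact (e ⟨x, hx⟩).2
  · rw [Finset.card_map, h]

end coef

open MeasureTheory

lemma integrable_of_bound {α : Type*} [MeasurableSpace α] (ν : Measure α)
    [IsProbabilityMeasure ν] (f : α → ℝ) (hf : Measurable f) (h : ∀ a, |f a| ≤ 1) :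
    Integrable f ν :=
  (integrable_const 1).mono' hf.aestronglyMeasurable (ae_of_all _ fun a => by
    simpa [Real.norm_eq_abs] using h a)

lemma map_eval (q : ℕ) (μ : Measure (Fin n → ℝ)) [IsProbabilityMeasure μ] (i : Fin q) :
    (Measure.pi fun _ : Fin q => μ).map (fun w => w i) = μ := by
  apply Measure.ext
  intro s hs
  rw [Measure.map_apply (measurable_pi_apply i) hs]
  have hpre : (fun w : Fin q → (Fin n → ℝ) => w i) ⁻¹' s
      = Set.pi Set.univ (Function.update (fun _ : Fin q => (Set.univ : Set (Fin n → ℝ))) i s) := by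
    ext w
    simp [Set.mem_pi, Function.update_apply]
  rw [hpre, Measure.pi_pi]
  have : ∀ j : Fin q, μ (Function.update (fun _ : Fin q => (Set.univ : Set (Fin n → ℝ))) i s j)
      = if j = i then μ s else 1 := by
    intro j
    rw [Function.update_apply]
    split <;> simp
  simp only [this]
  rw [Finset.prod_ite_eq' Finset.univ i (fun _ => μ s)]
  simp

lemma integral_eval {q : ℕ} (μ : Measure (Fin n → ℝ)) [IsProbabilityMeasure μ]
    (f : (Fin n → ℝ) → ℝ) (hf : Measurable f) (i : Fin q) :
    ∫ w : Fin q → Fin n → ℝ, f (w i) ∂(Measure.pi fun _ => μ) = ∫ w, f w ∂μ := by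
  have hm := map_eval (n := n) q μ i
  calc ∫ w : Fin q → Fin n → ℝ, f (w i) ∂(Measure.pi fun _ => μ)
      = ∫ v, f v ∂((Measure.pi fun _ : Fin q => μ).map (fun w => w i)) :=
        (integral_map (measurable_pi_apply i).aemeasurable hf.aestronglyMeasurable).symm
    _ = ∫ v, f v ∂μ := by rw [hm]

lemma integral_coef_sq_congr (dσ : ℝ → ℝ) (hmeas : Measurable dσ)
    (μ : Measure (Fin n → ℝ)) [IsProbabilityMeasure μ]
    (hinv : ∀ π : Equiv.Perm (Fin n), μ.map (fun w => w ∘ π) = μ)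
    (c β : ℝ) {K K' : Finset (Fin n)} (h : K.card = K'.card) :
    ∫ w, (coef dσ c β w K)^2 ∂μ = ∫ w, (coef dσ c β w K')^2 ∂μ := by
  obtain ⟨π, hπ⟩ := exists_perm_map K K' h
  have hT : Measurable (fun w : Fin n → ℝ => w ∘ π) :=
    measurable_pi_lambda _ fun l => measurable_pi_apply (π l)
  have hfm : Measurable (fun w => (coef dσ c β w K)^2) :=
    (coef_measurable dσ hmeas c β K).pow_const 2
  calc ∫ w, (coef dσ c β w K)^2 ∂μ
      = ∫ w, (coef dσ c β w K)^2 ∂(μ.map (fun w => w ∘ π)) := by rw [hinv π]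
    _ = ∫ w, (coef dσ c β (w ∘ π) K)^2 ∂μ := integral_map hT.aemeasurable hfm.aestronglyMeasurable
    _ = ∫ w, (coef dσ c β w (K.map π.toEmbedding))^2 ∂μ :=
        integral_congr_ae (ae_of_all _ fun w => by simp only [coef_perm])
    _ = ∫ w, (coef dσ c β w K')^2 ∂μ := by rw [hπ]


def Kf (I : Finset (Fin n)) (j : Fin n) : Finset (Fin n) :=
  if j ∈ I then I.erase j else insert j I

lemma sgn_chi (x : Fin n → Bool) (j : Fin n) (I : Finset (Fin n)) :
    sgn x j * chi I x = chi (Kf I j) x := by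
  unfold Kf
  split
  · next hj =>
    unfold chi
    rw [← Finset.mul_prod_erase I _ hj, ← mul_assoc, sgn_mul_self, one_mul]
  · next hj =>
    unfold chi
    rw [Finset.prod_insert hj]

lemma arith (n k : ℕ) (hk0 : 0 < k) (hkn : k < n) (A A' : ℝ) (hA : 0 ≤ A) (hA' : 0 ≤ A')
    (hP : (n.choose (k-1) : ℝ) * A + (n.choose (k+1) : ℝ) * A' ≤ 1) :
    (k : ℝ) * A + ((n - k : ℕ) : ℝ) * A'
      ≤ (n:ℝ) * min (((n-1).choose k : ℝ))⁻¹ (((n-1).choose (k-1) : ℝ))⁻¹ := by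
  obtain ⟨k', rfl⟩ : ∃ k', k = k' + 1 := ⟨k - 1, by omega⟩
  obtain ⟨m, rfl⟩ : ∃ m, n = m + 1 := ⟨n - 1, by omega⟩
  have hkm : k' + 1 ≤ m := by omega
  simp only [Nat.add_sub_cancel] at hP ⊢
  set c1 : ℕ := (m+1).choose k' with hc1
  set c2 : ℕ := (m+1).choose (k'+2) with hc2
  set d1 : ℕ := m.choose (k'+1) with hd1
  set d2 : ℕ := m.choose k' with hd2
  have id1 : d1 * (k'+1) = d2 * (m - k') := Nat.choose_succ_right_eq m k'
  have hd1pos : 0 < d1 := Nat.choose_pos hkm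
  have hd2pos : 0 < d2 := Nat.choose_pos (by omega)
  have hle1 : d2 ≤ c1 := Nat.choose_le_choose k' (by omega)
  have hle2 : d1 ≤ c2 := by
    rw [hc2, Nat.choose_succ_succ]
    exact Nat.le_add_right _ _
  have f1 : (k'+1) * d2 ≤ (m+1) * c1 := Nat.mul_le_mul (by omega) hle1
  have f2 : (k'+1) * d1 ≤ (m+1) * c1 := by
    calc (k'+1) * d1 = d2 * (m - k') := by rw [mul_comm]; exact id1
      _ ≤ c1 * (m+1) := Nat.mul_le_mul hle1 (by omega)
      _ = (m+1) * c1 := mul_comm _ _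
  have f3 : (m - k') * d1 ≤ (m+1) * c2 := Nat.mul_le_mul (by omega) hle2
  have f4 : (m - k') * d2 ≤ (m+1) * c2 := by
    calc (m - k') * d2 = d1 * (k'+1) := by rw [mul_comm]; exact id1.symm
      _ ≤ c2 * (m+1) := Nat.mul_le_mul hle2 (by omega)
      _ = (m+1) * c2 := mul_comm _ _
  -- go to reals
  set M : ℝ := ((m+1 : ℕ) : ℝ) * min ((d1 : ℝ))⁻¹ ((d2 : ℝ))⁻¹ with hM
  have hd1R : (0:ℝ) < (d1 : ℝ) := by exact_mod_cast hd1pos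
  have hd2R : (0:ℝ) < (d2 : ℝ) := by exact_mod_cast hd2pos
  have hM0 : 0 ≤ M := by positivity
  have key : ∀ (a c d : ℕ), a * d ≤ (m+1) * c → 0 < d →
      (a : ℝ) ≤ ((m+1:ℕ) : ℝ) * ((d:ℝ))⁻¹ * (c : ℝ) := by
    intro a c d h hd
    have hdR : (0:ℝ) < (d:ℝ) := by exact_mod_cast hd
    have hR : (a : ℝ) * (d : ℝ) ≤ ((m+1:ℕ):ℝ) * (c:ℝ) := by exact_mod_cast h
    have ha : (a:ℝ) = (a:ℝ) * d * (d:ℝ)⁻¹ := by field_simp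
    rw [ha]
    calc (a:ℝ) * d * (d:ℝ)⁻¹ ≤ (((m+1:ℕ):ℝ) * (c:ℝ)) * (d:ℝ)⁻¹ :=
          mul_le_mul_of_nonneg_right hR (by positivity)
      _ = ((m+1:ℕ):ℝ) * ((d:ℝ))⁻¹ * (c:ℝ) := by ring
  have hkM : ((k'+1 : ℕ) : ℝ) ≤ M * (c1 : ℝ) := by
    rcases min_choice ((d1:ℝ))⁻¹ ((d2:ℝ))⁻¹ with h | h
    · rw [hM, h]; exact key (k'+1) c1 d1 f2 hd1pos
    · rw [hM, h]; exact key (k'+1) c1 d2 f1 hd2pos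
  have hnkM : ((m - k' : ℕ) : ℝ) ≤ M * (c2 : ℝ) := by
    rcases min_choice ((d1:ℝ))⁻¹ ((d2:ℝ))⁻¹ with h | h
    · rw [hM, h]; exact key (m - k') c2 d1 f3 hd1pos
    · rw [hM, h]; exact key (m - k') c2 d2 f4 hd2pos
  have hsub : m + 1 - (k' + 1) = m - k' := by omega
  rw [hsub]
  calc ((k'+1 : ℕ) : ℝ) * A + ((m - k' : ℕ) : ℝ) * A'
      ≤ (M * (c1:ℝ)) * A + (M * (c2:ℝ)) * A' :=
        add_le_add (mul_le_mul_of_nonneg_right hkM hA)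
          (mul_le_mul_of_nonneg_right hnkM hA')
    _ = M * ((c1:ℝ) * A + (c2:ℝ) * A') := by ring
    _ ≤ M * 1 := mul_le_mul_of_nonneg_left hP hM0
    _ = M := mul_one M
    _ = ((m+1 : ℕ) : ℝ) * min (((m.choose (k'+1)) : ℝ))⁻¹ (((m.choose k') : ℝ))⁻¹ := rfl

end Stmt14




open MeasureTheory in
/-- FCN hardness, first-layer gradient. For a one-hidden-layer fully connected network
`h(x) = ∑_i u_i σ(⟨w^{(i)}, x⟩ + b_i)` with `|σ'| ≤ 1`, `|u_i| ≤ 1` and `h(x) ∈ [-1,1]`,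
uniform `D` on `{±1}^n` and target parity `f = χ_I` with `|I| = k`, if the rows
`w^{(1)}, ..., w^{(q)}` are drawn i.i.d. from a permutation-invariant distribution `μ` on
`ℝ^n`, then the expected squared norm of the gradient of the population hinge loss with
respect to the first layer (whose `(i,j)` entry is
`-E_x[x_j u_i σ'(⟨w^{(i)},x⟩ + b_i) χ_I(x)]`) is at most
`q n · min{C(n-1,k)⁻¹, C(n-1,k-1)⁻¹}`. -/
theorem stmt_14 (n k q : ℕ) (hk0 : 0 < k) (hkn : k < n)
    (I : Finset (Fin n)) (hI : I.card = k)
    (σ dσ : ℝ → ℝ) (hderiv : ∀ t, HasDerivAt σ (dσ t) t) (hdσ : ∀ t, |dσ t| ≤ 1)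
    (hmeas : Measurable dσ)
    (u : Fin q → ℝ) (hu : ∀ i, |u i| ≤ 1) (b : Fin q → ℝ)
    (μ : Measure (Fin n → ℝ)) [IsProbabilityMeasure μ]
    (hinv : ∀ π : Equiv.Perm (Fin n), μ.map (fun w => w ∘ π) = μ)
    (hbound : ∀ᵐ w : Fin q → Fin n → ℝ ∂(Measure.pi fun _ => μ),
      ∀ x : Fin n → Bool,
        |∑ i : Fin q, u i *
          σ (∑ l : Fin n, w i l * (if x l then (1 : ℝ) else -1) + b i)| ≤ 1) :
    (∫ w : Fin q → Fin n → ℝ,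
        (∑ i : Fin q, ∑ j : Fin n,
          (((2 : ℝ) ^ n)⁻¹ * ∑ x : Fin n → Bool,
            (if x j then (1 : ℝ) else -1) * u i *
              dσ (∑ l : Fin n, w i l * (if x l then (1 : ℝ) else -1) + b i) *
              ∏ i' ∈ I, (if x i' then (1 : ℝ) else -1)) ^ 2)
        ∂(Measure.pi fun _ => μ))
      ≤ (q : ℝ) * n * min (((n - 1).choose k : ℝ))⁻¹ (((n - 1).choose (k - 1) : ℝ))⁻¹ := by
  classical
  open Stmt14 in
  have hrw : ∀ (w : Fin q → Fin n → ℝ),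
      (∑ i : Fin q, ∑ j : Fin n,
          (((2 : ℝ) ^ n)⁻¹ * ∑ x : Fin n → Bool,
            (if x j then (1 : ℝ) else -1) * u i *
              dσ (∑ l : Fin n, w i l * (if x l then (1 : ℝ) else -1) + b i) *
              ∏ i' ∈ I, (if x i' then (1 : ℝ) else -1)) ^ 2)
      = ∑ i : Fin q, ∑ j : Fin n, (Stmt14.coef dσ (u i) (b i) (w i) (Stmt14.Kf I j))^2 := by
    intro w
    refine Finset.sum_congr rfl fun i _ => Finset.sum_congr rfl fun j _ => ?_
    have hbase : (((2 : ℝ) ^ n)⁻¹ * ∑ x : Fin n → Bool,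
        (if x j then (1 : ℝ) else -1) * u i *
          dσ (∑ l : Fin n, w i l * (if x l then (1 : ℝ) else -1) + b i) *
          ∏ i' ∈ I, (if x i' then (1 : ℝ) else -1))
        = Stmt14.coef dσ (u i) (b i) (w i) (Stmt14.Kf I j) := by
      unfold Stmt14.coef
      congr 1
      refine Finset.sum_congr rfl fun x _ => ?_
      have hx := Stmt14.sgn_chi x j I
      simp only [Stmt14.sgn, Stmt14.chi] at hx ⊢
      rw [← hx]
      ring
    rw [hbase]
  rw [integral_congr_ae (ae_of_all _ hrw)]
  have hint : ∀ (i : Fin q) (K : Finset (Fin n)),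
      Integrable (fun w : Fin q → Fin n → ℝ => (Stmt14.coef dσ (u i) (b i) (w i) K)^2)
        (Measure.pi fun _ => μ) := by
    intro i K
    apply Stmt14.integrable_of_bound
    · exact ((Stmt14.coef_measurable dσ hmeas _ _ K).comp (measurable_pi_apply i)).pow_const 2
    · intro w
      have h1 := Stmt14.coef_abs_le dσ hdσ (hu i) (b i) (w i) K
      calc |(Stmt14.coef dσ (u i) (b i) (w i) K)^2|
          = |Stmt14.coef dσ (u i) (b i) (w i) K|^2 := abs_pow _ 2
        _ ≤ 1 := pow_le_one₀ (abs_nonneg _) h1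
  rw [integral_finset_sum _ (fun i _ => integrable_finset_sum _ (fun j _ => hint i (Stmt14.Kf I j)))]
  have hmarg : ∀ (i : Fin q) (K : Finset (Fin n)),
      ∫ w : Fin q → Fin n → ℝ, (Stmt14.coef dσ (u i) (b i) (w i) K)^2 ∂(Measure.pi fun _ => μ)
        = ∫ v, (Stmt14.coef dσ (u i) (b i) v K)^2 ∂μ :=
    fun i K => Stmt14.integral_eval μ _ ((Stmt14.coef_measurable dσ hmeas _ _ K).pow_const 2) i
  have hstep : ∀ i : Fin q,
      ∫ w : Fin q → Fin n → ℝ, (∑ j : Fin n, (Stmt14.coef dσ (u i) (b i) (w i) (Stmt14.Kf I j))^2)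
          ∂(Measure.pi fun _ => μ)
        = ∑ j : Fin n, ∫ v, (Stmt14.coef dσ (u i) (b i) v (Stmt14.Kf I j))^2 ∂μ := by
    intro i
    rw [integral_finset_sum _ (fun j _ => hint i (Stmt14.Kf I j))]
    exact Finset.sum_congr rfl fun j _ => hmarg i (Stmt14.Kf I j)
  simp only [hstep]
  -- per-row bound
  suffices hper : ∀ i : Fin q,
      ∑ j : Fin n, ∫ v, (Stmt14.coef dσ (u i) (b i) v (Stmt14.Kf I j))^2 ∂μ
        ≤ (n:ℝ) * min (((n - 1).choose k : ℝ))⁻¹ (((n - 1).choose (k - 1) : ℝ))⁻¹ by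
    calc ∑ i : Fin q, ∑ j : Fin n, ∫ v, (Stmt14.coef dσ (u i) (b i) v (Stmt14.Kf I j))^2 ∂μ
        ≤ ∑ _i : Fin q, (n:ℝ) * min (((n - 1).choose k : ℝ))⁻¹ (((n - 1).choose (k - 1) : ℝ))⁻¹ :=
          Finset.sum_le_sum fun i _ => hper i
      _ = (q : ℝ) * ((n:ℝ) * min (((n - 1).choose k : ℝ))⁻¹ (((n - 1).choose (k - 1) : ℝ))⁻¹) := by
          rw [Finset.sum_const, Finset.card_univ, Fintype.card_fin, nsmul_eq_mul]
      _ = (q : ℝ) * n * min (((n - 1).choose k : ℝ))⁻¹ (((n - 1).choose (k - 1) : ℝ))⁻¹ := by ring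
  intro i
  obtain ⟨j₀, hj₀⟩ := Finset.card_pos.mp (by rw [hI]; exact hk0)
  obtain ⟨j₁, hj₁⟩ : ∃ j, j ∉ I := by
    by_contra hc
    push_neg at hc
    have huniv : I = Finset.univ := Finset.eq_univ_iff_forall.mpr hc
    rw [huniv, Finset.card_univ, Fintype.card_fin] at hI
    omega
  set c := u i with hc
  set β := b i with hβ
  set A := ∫ v, (Stmt14.coef dσ c β v (I.erase j₀))^2 ∂μ with hA
  set A' := ∫ v, (Stmt14.coef dσ c β v (insert j₁ I))^2 ∂μ with hA'
  have hKmcard : (I.erase j₀).card = k - 1 := by rw [Finset.card_erase_of_mem hj₀, hI]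
  have hKpcard : (insert j₁ I).card = k + 1 := by rw [Finset.card_insert_of_notMem hj₁, hI]
  have hA0 : 0 ≤ A := integral_nonneg fun v => sq_nonneg _
  have hA'0 : 0 ≤ A' := integral_nonneg fun v => sq_nonneg _
  have hcongr : ∀ {K K' : Finset (Fin n)}, K.card = K'.card →
      ∫ v, (Stmt14.coef dσ c β v K)^2 ∂μ = ∫ v, (Stmt14.coef dσ c β v K')^2 ∂μ :=
    fun h => Stmt14.integral_coef_sq_congr dσ hmeas μ hinv c β h
  have hsplit : ∑ j : Fin n, ∫ v, (Stmt14.coef dσ c β v (Stmt14.Kf I j))^2 ∂μ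
      = (k:ℝ) * A + ((n - k : ℕ):ℝ) * A' := by
    rw [← Finset.sum_filter_add_sum_filter_not Finset.univ (· ∈ I)]
    have e1 : ∀ j ∈ Finset.univ.filter (· ∈ I),
        ∫ v, (Stmt14.coef dσ c β v (Stmt14.Kf I j))^2 ∂μ = A := by
      intro j hj
      have hjI : j ∈ I := (Finset.mem_filter.mp hj).2
      have : Stmt14.Kf I j = I.erase j := by unfold Stmt14.Kf; rw [if_pos hjI]
      rw [this]
      exact hcongr (K := I.erase j) (K' := I.erase j₀)
        (by rw [Finset.card_erase_of_mem hjI, hKmcard, hI])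
    have e2 : ∀ j ∈ Finset.univ.filter (fun j => ¬ j ∈ I),
        ∫ v, (Stmt14.coef dσ c β v (Stmt14.Kf I j))^2 ∂μ = A' := by
      intro j hj
      have hjI : j ∉ I := (Finset.mem_filter.mp hj).2
      have : Stmt14.Kf I j = insert j I := by unfold Stmt14.Kf; rw [if_neg hjI]
      rw [this]
      exact hcongr (K := insert j I) (K' := insert j₁ I)
        (by rw [Finset.card_insert_of_notMem hjI, hKpcard, hI])
    rw [Finset.sum_congr rfl e1, Finset.sum_congr rfl e2, Finset.sum_const, Finset.sum_const]
    have hcard1 : (Finset.univ.filter (· ∈ I)).card = k := by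
      have : Finset.univ.filter (· ∈ I) = I := by ext a; simp
      rw [this, hI]
    have hcard2 : (Finset.univ.filter (fun j => ¬ j ∈ I)).card = n - k := by
      have : Finset.univ.filter (fun j => ¬ j ∈ I) = Iᶜ := by ext a; simp
      rw [this, Finset.card_compl, Fintype.card_fin, hI]
    rw [hcard1, hcard2, nsmul_eq_mul, nsmul_eq_mul]
  rw [hsplit]
  -- Parseval aggregate
  have hint2 : ∀ K : Finset (Fin n), Integrable (fun v => (Stmt14.coef dσ c β v K)^2) μ := by
    intro K
    apply Stmt14.integrable_of_bound
    · exact (Stmt14.coef_measurable dσ hmeas _ _ K).pow_const 2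
    · intro v
      have h1 := Stmt14.coef_abs_le dσ hdσ (hu i) β v K
      calc |(Stmt14.coef dσ c β v K)^2| = |Stmt14.coef dσ c β v K|^2 := abs_pow _ 2
        _ ≤ 1 := pow_le_one₀ (abs_nonneg _) h1
  have hpars : ((n.choose (k-1) : ℕ):ℝ) * A + ((n.choose (k+1) : ℕ):ℝ) * A' ≤ 1 := by
    have h1 : ∑ K ∈ Finset.powersetCard (k-1) (Finset.univ : Finset (Fin n)),
        ∫ v, (Stmt14.coef dσ c β v K)^2 ∂μ = ((n.choose (k-1) : ℕ):ℝ) * A := by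
      rw [Finset.sum_congr rfl (fun K hK => hcongr (K := K) (K' := I.erase j₀)
        (by rw [(Finset.mem_powersetCard_univ.mp hK : K.card = k - 1), hKmcard])),
        Finset.sum_const, Finset.card_powersetCard, Finset.card_univ, Fintype.card_fin,
        nsmul_eq_mul]
    have h2 : ∑ K ∈ Finset.powersetCard (k+1) (Finset.univ : Finset (Fin n)),
        ∫ v, (Stmt14.coef dσ c β v K)^2 ∂μ = ((n.choose (k+1) : ℕ):ℝ) * A' := by
      rw [Finset.sum_congr rfl (fun K hK => hcongr (K := K) (K' := insert j₁ I)
        (by rw [(Finset.mem_powersetCard_univ.mp hK : K.card = k + 1), hKpcard])),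
        Finset.sum_const, Finset.card_powersetCard, Finset.card_univ, Fintype.card_fin,
        nsmul_eq_mul]
    have hdisj : Disjoint (Finset.powersetCard (k-1) (Finset.univ : Finset (Fin n)))
        (Finset.powersetCard (k+1) (Finset.univ : Finset (Fin n))) := by
      rw [Finset.disjoint_left]
      intro K hK1 hK2
      have c1 := Finset.mem_powersetCard_univ.mp hK1
      have c2 := Finset.mem_powersetCard_univ.mp hK2
      omega
    calc ((n.choose (k-1) : ℕ):ℝ) * A + ((n.choose (k+1) : ℕ):ℝ) * A'
        = ∑ K ∈ (Finset.powersetCard (k-1) (Finset.univ : Finset (Fin n))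
            ∪ Finset.powersetCard (k+1) (Finset.univ : Finset (Fin n))),
            ∫ v, (Stmt14.coef dσ c β v K)^2 ∂μ := by
          rw [Finset.sum_union hdisj, h1, h2]
      _ ≤ ∑ K : Finset (Fin n), ∫ v, (Stmt14.coef dσ c β v K)^2 ∂μ :=
          Finset.sum_le_sum_of_subset_of_nonneg (Finset.subset_univ _)
            (fun K _ _ => integral_nonneg fun v => sq_nonneg _)
      _ = ∫ v, ∑ K : Finset (Fin n), (Stmt14.coef dσ c β v K)^2 ∂μ :=
          (integral_finset_sum _ fun K _ => hint2 K).symm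
      _ ≤ ∫ _v, (1:ℝ) ∂μ := by
          refine integral_mono (integrable_finset_sum _ fun K _ => hint2 K)
            (integrable_const 1) (fun v => ?_)
          have hbd : ∀ x : Fin n → Bool,
              |c * dσ (∑ l, v l * Stmt14.sgn x l + β)| ≤ 1 := by
            intro x
            rw [abs_mul]
            exact mul_le_one₀ (hu i) (abs_nonneg _) (hdσ _)
          exact Stmt14.parseval (fun x => c * dσ (∑ l, v l * Stmt14.sgn x l + β)) hbd
      _ = 1 := by simp
  exact Stmt14.arith n k hk0 hkn A A' hA0 hA'0 hpars
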